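/- arXiv:2208.11677 — 3 statements merged into one kernel-verified Lean document; each statement's English description precedes it below -/
import Mathlib

section
/- In the multi-stripe setting, let Π_{q,0} ∈ ℂ^{K×K} for q = 1,…,Q be the matrices produced by the backward recursion Π_{q,M} := 0, V_{q,m} := (I − Π_{q,m}P_{q,m})^{-1}(I − Π_{q,m}), V̄_{q,m} := I − P_{q,m}V_{q,m}, Π_{q,m} := E[P_{q,m+1}V_{q,m+1}] + Π_{q,m+1}E[V̄_{q,m+1}] down to m = 0, from mutually independent square-integrable random matrices Ĥ_{q,1},…,Ĥ_{q,M}, with P_{q,m} := W^{1/2}Ĥ_{q,m}(Ĥ_{q,m}ᴴWĤ_{q,m} + Ψ_{q,m} + P^{-1}I)^{-1}Ĥ_{q,m}ᴴW^{1/2}. Then for every nonempty subset 𝒬_k ⊆ {1,…,Q} and every standard basis vector e_k of ℂ^K, the linear system c_q + Σ_{j ∈ 𝒬_k∖{q}} Π_{j,0} c_j = e_k, required for all q ∈ 𝒬_k, has a unique solution (c_q)_{q ∈ 𝒬_k} in (ℂ^K)^{𝒬_k}. -/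
open MeasureTheory ProbabilityTheory Matrix Finset
open scoped ENNReal

noncomputable section

/-- Squared Euclidean norm of a complex vector, valued in `ℝ≥0∞`. -/
def enormSq {n : Type*} [Fintype n] (v : n → ℂ) : ℝ≥0∞ := ∑ i, (‖v i‖₊ : ℝ≥0∞) ^ 2

/-- Squared Frobenius norm of a complex matrix, valued in `ℝ≥0∞`. -/
def frobSq {a b : Type*} [Fintype a] [Fintype b] (A : Matrix a b ℂ) : ℝ≥0∞ :=
  ∑ i, ∑ j, (‖A i j‖₊ : ℝ≥0∞) ^ 2

/-- `diag(w)` as a complex matrix. -/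
def diagC {K : ℕ} (w : Fin K → ℝ) : Matrix (Fin K) (Fin K) ℂ :=
  Matrix.diagonal fun i => (w i : ℂ)

/-- `diag(w)^{1/2}` as a complex matrix. -/
def sqrtDiag {K : ℕ} (w : Fin K → ℝ) : Matrix (Fin K) (Fin K) ℂ :=
  Matrix.diagonal fun i => (Real.sqrt (w i) : ℂ)

/-- The team MSE functional `MSE_k`, written in block form:
`MSE_k(t) = E[ ‖W^{1/2} H t - e_k‖² + P⁻¹ ‖t‖² ]`, where `H t = ∑ l, H_l t_l` and
`‖t‖² = ∑ l, ‖t_l‖²`. -/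
def teamMSE {Ω : Type*} {m0 : MeasurableSpace Ω} {ι : Type*} [Fintype ι] {K N : ℕ}
    (μ : Measure Ω) (w : Fin K → ℝ) (P : ℝ) (Hb : ι → Ω → Matrix (Fin K) (Fin N) ℂ)
    (k : Fin K) (t : ι → Ω → Fin N → ℂ) : ℝ≥0∞ :=
  ∫⁻ ω, enormSq ((∑ l, (sqrtDiag w * Hb l ω) *ᵥ t l ω) - Pi.single k 1)
      + ENNReal.ofReal P⁻¹ * ∑ l, enormSq (t l ω) ∂μ

/-- Membership in the constraint set `𝒯^{(k)}`: each block `t_l` is square-integrable,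
`Σ_l`-measurable when `l` belongs to the serving set, and a.s. zero otherwise. -/
def memT {Ω : Type*} {m0 : MeasurableSpace Ω} {ι : Type*} {N : ℕ} (μ : Measure Ω)
    (msig : ι → MeasurableSpace Ω) (Lk : Finset ι) (t : ι → Ω → Fin N → ℂ) : Prop :=
  ∀ l, MemLp (t l) 2 μ ∧ (l ∈ Lk → Measurable[msig l] (t l)) ∧
    (l ∉ Lk → t l =ᵐ[μ] fun _ => 0)

/-- Entrywise conditional expectation of a random vector. -/
def cExpVec {Ω : Type*} {N : Type*} {m0 : MeasurableSpace Ω} (μ : Measure Ω)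
    (m : MeasurableSpace Ω) (v : Ω → N → ℂ) : Ω → N → ℂ :=
  fun ω i => (μ[fun ω' => v ω' i|m]) ω

/-- Entrywise conditional expectation of a random matrix. -/
def cExpMat {Ω a b : Type*} {m0 : MeasurableSpace Ω} (μ : Measure Ω)
    (m : MeasurableSpace Ω) (M : Ω → Matrix a b ℂ) : Ω → Matrix a b ℂ :=
  fun ω => Matrix.of fun i j => (μ[fun ω' => M ω' i j|m]) ω

/-- Entrywise expectation of a random matrix. -/
def intMat {Ω a b : Type*} {m0 : MeasurableSpace Ω} (μ : Measure Ω)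
    (M : Ω → Matrix a b ℂ) : Matrix a b ℂ := Matrix.of fun i j => ∫ ω, M ω i j ∂μ

/-- The σ-algebra generated by a random matrix. -/
def sigGen {Ω : Type*} {K N : ℕ} (F : Ω → Matrix (Fin K) (Fin N) ℂ) : MeasurableSpace Ω :=
  ⨆ i, ⨆ j, MeasurableSpace.comap (fun ω => F ω i j) inferInstance

/-- Downlink SINR of user `k` under distributed precoding (hardening bound):
`SINR_k = p_k |E[g_kᴴ t_k]|² / (p_k Var[g_kᴴ t_k] + ∑_{j ≠ k} p_j E[|g_kᴴ t_j|²] + 1)`,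
where `g_kᴴ t_j = (H t_j)_k = ∑ l, (H_l t_{j,l})_k`. -/
def dlSINR {Ω : Type*} {m0 : MeasurableSpace Ω} {K L N : ℕ}
    (μ : Measure Ω) (Hb : Fin L → Ω → Matrix (Fin K) (Fin N) ℂ)
    (p : Fin K → ℝ) (t : Fin K → Fin L → Ω → Fin N → ℂ) (k : Fin K) : ℝ :=
  p k * ‖∫ ω, ∑ l, (Hb l ω *ᵥ t k l ω) k ∂μ‖ ^ 2 /
    (p k * ((∫ ω, ‖∑ l, (Hb l ω *ᵥ t k l ω) k‖ ^ 2 ∂μ)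
          - ‖∫ ω, ∑ l, (Hb l ω *ᵥ t k l ω) k ∂μ‖ ^ 2)
      + (∑ j ∈ Finset.univ.erase k, p j * ∫ ω, ‖∑ l, (Hb l ω *ᵥ t j l ω) k‖ ^ 2 ∂μ) + 1)

open scoped ComplexOrder

/-- `T = (Ĥᴴ W Ĥ + Ψ + P⁻¹ I)⁻¹ Ĥᴴ W^{1/2}`. -/
def Tof {K N : ℕ} (w : Fin K → ℝ) (P : ℝ) (Ψ : Matrix (Fin N) (Fin N) ℂ)
    (Hh : Matrix (Fin K) (Fin N) ℂ) : Matrix (Fin N) (Fin K) ℂ :=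
  (Hhᴴ * diagC w * Hh + Ψ + (P⁻¹ : ℂ) • 1)⁻¹ * (Hhᴴ * sqrtDiag w)

/-- `P = W^{1/2} Ĥ T`. -/
def Pof {K N : ℕ} (w : Fin K → ℝ) (P : ℝ) (Ψ : Matrix (Fin N) (Fin N) ℂ)
    (Hh : Matrix (Fin K) (Fin N) ℂ) : Matrix (Fin K) (Fin K) ℂ :=
  sqrtDiag w * Hh * Tof w P Ψ Hh

/-- `V = (I − Π P)⁻¹ (I − Π)`. -/
def Vof {K : ℕ} (Pi Pm : Matrix (Fin K) (Fin K) ℂ) : Matrix (Fin K) (Fin K) ℂ :=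
  (1 - Pi * Pm)⁻¹ * (1 - Pi)

/-- `V̄ = I − P V`. -/
def Vbarof {K : ℕ} (Pi Pm : Matrix (Fin K) (Fin K) ℂ) : Matrix (Fin K) (Fin K) ℂ :=
  1 - Pm * Vof Pi Pm

/-- Backward recursion for the deterministic matrices `Π_m` (unidirectional CSIT sharing):
`Π_M := 0` and `Π_m := E[P_{m+1} V_{m+1}] + Π_{m+1} E[V̄_{m+1}]` for `m < M`, where
`V_{m+1}, V̄_{m+1}` are built from `Π_{m+1}` and `P_{m+1}`. -/
def PiRec {Ω : Type*} {m0 : MeasurableSpace Ω} {K : ℕ} (μ : Measure Ω)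
    (Pf : ℕ → Ω → Matrix (Fin K) (Fin K) ℂ) (M : ℕ) (m : ℕ) : Matrix (Fin K) (Fin K) ℂ :=
  if h : M ≤ m then 0
  else
    intMat μ (fun ω => Pf (m+1) ω * Vof (PiRec μ Pf M (m+1)) (Pf (m+1) ω))
      + PiRec μ Pf M (m+1) * intMat μ (fun ω => Vbarof (PiRec μ Pf M (m+1)) (Pf (m+1) ω))
termination_by M - m
decreasing_by all_goals omega

/-- Backward recursion for the random matrices `P̄_m` (bidirectional CSIT sharing):
`P̄_M := 0` and `P̄_m := P_{m+1} V_{m+1} + P̄_{m+1} V̄_{m+1}` pathwise. -/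
def PbarRec {Ω : Type*} {K : ℕ} (Pf : ℕ → Ω → Matrix (Fin K) (Fin K) ℂ) (M : ℕ) (m : ℕ)
    (ω : Ω) : Matrix (Fin K) (Fin K) ℂ :=
  if h : M ≤ m then 0
  else
    Pf (m+1) ω * Vof (PbarRec Pf M (m+1) ω) (Pf (m+1) ω)
      + PbarRec Pf M (m+1) ω * Vbarof (PbarRec Pf M (m+1) ω) (Pf (m+1) ω)
termination_by M - m
decreasing_by all_goals omega

/-- Left product `V̄_m ⋯ V̄_1` (empty product for `m = 0`). -/
def lprodV {Ω : Type*} {K : ℕ} (Vb : ℕ → Ω → Matrix (Fin K) (Fin K) ℂ) :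
    ℕ → Ω → Matrix (Fin K) (Fin K) ℂ
  | 0 => fun _ => 1
  | n+1 => fun ω => Vb (n+1) ω * lprodV Vb n ω

/-- The random matrix process `P_m = W^{1/2} Ĥ_m T_m`. -/
def PmFun {Ω : Type*} {K N : ℕ} (w : Fin K → ℝ) (P : ℝ)
    (Ψ : ℕ → Matrix (Fin N) (Fin N) ℂ) (Hhat : ℕ → Ω → Matrix (Fin K) (Fin N) ℂ)
    (m : ℕ) (ω : Ω) : Matrix (Fin K) (Fin K) ℂ :=
  Pof w P (Ψ m) (Hhat m ω)

/-- `V_m` built from `Π_m` (unidirectional CSIT sharing). -/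
def VmFun {Ω : Type*} {m0 : MeasurableSpace Ω} {K N : ℕ} (μ : Measure Ω) (w : Fin K → ℝ)
    (P : ℝ) (Ψ : ℕ → Matrix (Fin N) (Fin N) ℂ) (Hhat : ℕ → Ω → Matrix (Fin K) (Fin N) ℂ)
    (M m : ℕ) (ω : Ω) : Matrix (Fin K) (Fin K) ℂ :=
  Vof (PiRec μ (PmFun w P Ψ Hhat) M m) (PmFun w P Ψ Hhat m ω)

/-- `V̄_m` built from `Π_m` (unidirectional CSIT sharing). -/
def VbFun {Ω : Type*} {m0 : MeasurableSpace Ω} {K N : ℕ} (μ : Measure Ω) (w : Fin K → ℝ)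
    (P : ℝ) (Ψ : ℕ → Matrix (Fin N) (Fin N) ℂ) (Hhat : ℕ → Ω → Matrix (Fin K) (Fin N) ℂ)
    (M m : ℕ) (ω : Ω) : Matrix (Fin K) (Fin K) ℂ :=
  Vbarof (PiRec μ (PmFun w P Ψ Hhat) M m) (PmFun w P Ψ Hhat m ω)

/-- `V_m` built from `P̄_m` (bidirectional CSIT sharing). -/
def VmFunB {Ω : Type*} {K N : ℕ} (w : Fin K → ℝ)
    (P : ℝ) (Ψ : ℕ → Matrix (Fin N) (Fin N) ℂ) (Hhat : ℕ → Ω → Matrix (Fin K) (Fin N) ℂ)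
    (M m : ℕ) (ω : Ω) : Matrix (Fin K) (Fin K) ℂ :=
  Vof (PbarRec (PmFun w P Ψ Hhat) M m ω) (PmFun w P Ψ Hhat m ω)

/-- `V̄_m` built from `P̄_m` (bidirectional CSIT sharing). -/
def VbFunB {Ω : Type*} {K N : ℕ} (w : Fin K → ℝ)
    (P : ℝ) (Ψ : ℕ → Matrix (Fin N) (Fin N) ℂ) (Hhat : ℕ → Ω → Matrix (Fin K) (Fin N) ℂ)
    (M m : ℕ) (ω : Ω) : Matrix (Fin K) (Fin K) ℂ :=
  Vbarof (PbarRec (PmFun w P Ψ Hhat) M m ω) (PmFun w P Ψ Hhat m ω)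

/-- σ-algebra generated by the estimates `Ĥ_1, …, Ĥ_m` of (an initial segment of) a stripe. -/
def stripeSig {Ω : Type*} {K N : ℕ} (Hhat : ℕ → Ω → Matrix (Fin K) (Fin N) ℂ) (m : ℕ) :
    MeasurableSpace Ω :=
  ⨆ n ∈ Finset.Icc 1 m, sigGen (Hhat n)


namespace St11
set_option linter.unusedSectionVars false


variable {n : Type*} [Fintype n] [DecidableEq n]

lemma isUnit_det_of_posDef {M : Matrix n n ℂ} (hM : M.PosDef) : IsUnit M.det :=
  hM.det_pos.ne'.isUnit

lemma mul_inv_pd {M : Matrix n n ℂ} (hM : M.PosDef) : M * M⁻¹ = 1 :=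
  Matrix.mul_nonsing_inv _ (isUnit_det_of_posDef hM)

lemma inv_mul_pd {M : Matrix n n ℂ} (hM : M.PosDef) : M⁻¹ * M = 1 :=
  Matrix.nonsing_inv_mul _ (isUnit_det_of_posDef hM)

lemma herm_sq_psd {M : Matrix n n ℂ} (hM : M.IsHermitian) : (M * M).PosSemidef := by
  have h := Matrix.posSemidef_conjTranspose_mul_self M
  rwa [hM.eq] at h

open scoped MatrixOrder in
lemma psd_mul_one_sub {M : Matrix n n ℂ} (hM : M.PosSemidef) (h1 : (1 - M).PosSemidef) :
    (M - M * M).PosSemidef := by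
  have hs := (CFC.sqrt_nonneg M).posSemidef
  have hss := CFC.sqrt_mul_sqrt_self M hM.nonneg
  have key := h1.mul_mul_conjTranspose_same (CFC.sqrt M)
  rw [hs.isHermitian.eq] at key
  have e : ∀ s : Matrix n n ℂ, s * s = M → s * (1 - M) * s = M - M * M := by
    intro s hss
    rw [← hss]; noncomm_ring
  rwa [e (CFC.sqrt M) hss] at key

lemma pd_inv_mul_psd {M : Matrix n n ℂ} (hM : M.PosSemidef) (h1 : (1 - M).PosDef) :
    ((1 - M)⁻¹ * M).PosSemidef := by
  have hCC : (1 - M) * (1 - M)⁻¹ = 1 := mul_inv_pd h1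
  have key := (psd_mul_one_sub hM h1.posSemidef).mul_mul_conjTranspose_same (1 - M)⁻¹
  rw [h1.inv.isHermitian.eq] at key
  have e : (1 - M)⁻¹ * (M - M * M) * (1 - M)⁻¹ = (1 - M)⁻¹ * M := by
    have e1 : M - M * M = M * (1 - M) := by noncomm_ring
    calc (1 - M)⁻¹ * (M - M * M) * (1 - M)⁻¹
        = (1 - M)⁻¹ * M * ((1 - M) * (1 - M)⁻¹) := by rw [e1]; noncomm_ring
      _ = (1 - M)⁻¹ * M := by rw [hCC, mul_one]
  rwa [e] at key

lemma one_sub_inv_psd {Z : Matrix n n ℂ} (hZ : Z.PosDef) (h1 : (Z - 1).PosSemidef) :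
    (1 - Z⁻¹).PosSemidef := by
  have hZZ : Z * Z⁻¹ = 1 := mul_inv_pd hZ
  have hZZ' : Z⁻¹ * Z = 1 := inv_mul_pd hZ
  have hmid : ((Z - 1) * (Z - 1) + (Z - 1)).PosSemidef :=
    (herm_sq_psd h1.isHermitian).add h1
  have key := hmid.mul_mul_conjTranspose_same Z⁻¹
  rw [hZ.inv.isHermitian.eq] at key
  have e : Z⁻¹ * ((Z - 1) * (Z - 1) + (Z - 1)) * Z⁻¹ = 1 - Z⁻¹ := by
    calc Z⁻¹ * ((Z - 1) * (Z - 1) + (Z - 1)) * Z⁻¹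
        = Z⁻¹ * ((Z - 1) * Z) * Z⁻¹ := by noncomm_ring
      _ = Z⁻¹ * (Z - 1) * (Z * Z⁻¹) := by noncomm_ring
      _ = Z⁻¹ * (Z - 1) := by rw [hZZ, mul_one]
      _ = Z⁻¹ * Z - Z⁻¹ := by noncomm_ring
      _ = 1 - Z⁻¹ := by rw [hZZ']
  rwa [e] at key

lemma commute_inv_left {A C : Matrix n n ℂ} (hC : C.PosDef) (h : C * A = A * C) :
    C⁻¹ * A = A * C⁻¹ := by
  calc C⁻¹ * A = C⁻¹ * A * (C * C⁻¹) := by rw [mul_inv_pd hC, mul_one]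
    _ = C⁻¹ * (A * C) * C⁻¹ := by noncomm_ring
    _ = C⁻¹ * (C * A) * C⁻¹ := by rw [h]
    _ = (C⁻¹ * C) * (A * C⁻¹) := by noncomm_ring
    _ = A * C⁻¹ := by rw [inv_mul_pd hC, one_mul]



set_option linter.unusedSectionVars false

lemma quadform_eq (M : Matrix n n ℂ) (x : n → ℂ) :
    dotProduct (star x) (M *ᵥ x) = ∑ i, ∑ j, star (x i) * M i j * x j := by
  simp only [dotProduct, mulVec, Pi.star_apply, Finset.mul_sum, mul_assoc]

lemma star_single (i : n) (c : ℂ) : star (Pi.single i c : n → ℂ) = Pi.single i (star c) := by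
  funext l
  by_cases hl : l = i <;> simp_all [Pi.single_apply]

lemma diag_nonneg {M : Matrix n n ℂ} (hM : M.PosSemidef) (i : n) :
    0 ≤ (M i i).re ∧ (M i i).im = 0 := by
  have h := hM.dotProduct_mulVec_nonneg (Pi.single i 1)
  have e : dotProduct (star (Pi.single i (1:ℂ))) (M *ᵥ Pi.single i 1) = M i i := by
    rw [star_single, mulVec_single, star_one, single_dotProduct]
    simp
  rw [e] at h
  obtain ⟨h1, h2⟩ := Complex.nonneg_iff.mp h
  exact ⟨h1, h2.symm⟩

lemma quad_two {M : Matrix n n ℂ} (hM : M.PosSemidef) (i j : n) (hij : i ≠ j) (c : ℂ) :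
    0 ≤ M i i + M i j * c + star c * M j i + star c * M j j * c := by
  have h := hM.dotProduct_mulVec_nonneg (Pi.single i (1:ℂ) + Pi.single j c)
  have hstar : star (Pi.single i (1:ℂ) + Pi.single j c : n → ℂ)
      = Pi.single i (1:ℂ) + Pi.single j (star c) := by
    rw [star_add, star_single, star_single, star_one]
  rw [hstar] at h
  have e : dotProduct (Pi.single i (1:ℂ) + Pi.single j (star c))
      (M *ᵥ (Pi.single i (1:ℂ) + Pi.single j c))
      = M i i + M i j * c + star c * M j i + star c * M j j * c := by
    rw [mulVec_add, mulVec_single, mulVec_single, add_dotProduct, single_dotProduct,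
      single_dotProduct]
    simp only [Pi.add_apply, Pi.smul_apply, Matrix.col_apply, op_smul_eq_mul]
    ring
  rw [e] at h
  exact h

lemma entry_norm_le_one {M : Matrix n n ℂ} (hM : M.PosSemidef) (h1 : (1 - M).PosSemidef)
    (i j : n) : ‖M i j‖ ≤ 1 := by
  have diag : ∀ l, 0 ≤ (M l l).re ∧ (M l l).re ≤ 1 ∧ (M l l).im = 0 := by
    intro l
    obtain ⟨h0, him⟩ := diag_nonneg hM l
    obtain ⟨h0', _⟩ := diag_nonneg h1 l
    have e : ((1 - M) l l).re = 1 - (M l l).re := by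
      simp [Matrix.sub_apply, Matrix.one_apply]
    rw [e] at h0'
    exact ⟨h0, by linarith, him⟩
  by_cases hij : i = j
  · subst hij
    obtain ⟨h0, h1', him⟩ := diag i
    have e : M i i = ((M i i).re : ℂ) := Complex.ext rfl (by simp [him])
    rw [e, Complex.norm_real, Real.norm_eq_abs, abs_of_nonneg h0]
    exact h1'
  · by_cases h0 : M i j = 0
    · simp [h0]
    · set r : ℝ := ‖M i j‖ with hr
      have hrpos : 0 < r := by simpa [hr] using h0
      have hrne : (r : ℂ) ≠ 0 := by
        simp only [ne_eq, Complex.ofReal_eq_zero]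
        exact hrpos.ne'
      have hji : M j i = star (M i j) := by
        have e := hM.1
        calc M j i = Mᴴ j i := by rw [e]
          _ = star (M i j) := rfl
      have hnormsq : M i j * star (M i j) = ((r^2 : ℝ) : ℂ) := by
        have e : star (M i j) = (starRingEnd ℂ) (M i j) := rfl
        rw [e, Complex.mul_conj, Complex.normSq_eq_norm_sq]
      set c : ℂ := -(star (M i j)) / r with hc
      have hcc : star c = -(M i j) / r := by
        rw [hc, star_div₀, star_neg, star_star, Complex.star_def, Complex.conj_ofReal]
      have h := quad_two hM i j hij c
      have e1 : M i j * c = -r := by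
        have e : M i j * (-(star (M i j)) / r) = -(M i j * star (M i j)) / r := by ring
        rw [hc, e, hnormsq]
        push_cast
        field_simp
      have e2 : star c * M j i = -r := by
        rw [hcc, hji]
        have e : -(M i j) / r * star (M i j) = -(M i j * star (M i j)) / r := by ring
        rw [e, hnormsq]
        push_cast
        field_simp
      have e3 : star c * M j j * c = M j j := by
        have e : star c * M j j * c = (star c * c) * M j j := by ring
        rw [e]
        have e' : star c * c = 1 := by
          rw [hcc, hc]
          have e'' : -(M i j) / ↑r * (-(star (M i j)) / ↑r) = (M i j * star (M i j)) / (r*r : ℂ) := by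
            ring
          rw [e'', hnormsq]
          push_cast
          field_simp
        rw [e', one_mul]
      rw [e1, e2, e3] at h
      obtain ⟨hre, _⟩ := Complex.nonneg_iff.mp h
      simp only [Complex.add_re, Complex.neg_re, Complex.ofReal_re] at hre
      have di := (diag i).2.1
      have dj := (diag j).2.1
      have d0i := (diag i).1
      have d0j := (diag j).1
      show r ≤ 1
      linarith



variable {Ω : Type*} [MeasurableSpace Ω]

lemma meas_det {a : Type*} [Fintype a] [DecidableEq a] {f : Ω → Matrix a a ℂ}
    (hf : ∀ i j, Measurable fun ω => f ω i j) : Measurable fun ω => (f ω).det := by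
  simp only [Matrix.det_apply']
  exact Finset.measurable_sum _ fun σ _ =>
    measurable_const.mul (Finset.measurable_prod _ fun i _ => hf (σ i) i)

lemma meas_inv {a : Type*} [Fintype a] [DecidableEq a] {f : Ω → Matrix a a ℂ}
    (hf : ∀ i j, Measurable fun ω => f ω i j) :
    ∀ i j, Measurable fun ω => (f ω)⁻¹ i j := by
  intro i j
  have e : ∀ ω, (f ω)⁻¹ i j = ((f ω).det)⁻¹ * (f ω).adjugate i j := by
    intro ω; rw [Matrix.inv_def, Matrix.smul_apply, Ring.inverse_eq_inv, smul_eq_mul]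
  simp only [e]
  apply Measurable.mul
  · exact (meas_det hf).inv
  · have e2 : ∀ ω, (f ω).adjugate i j = ((f ω).updateRow j (Pi.single i 1)).det :=
      fun ω => Matrix.adjugate_apply _ i j
    simp only [e2]
    apply meas_det
    intro a b
    by_cases haj : a = j
    · simp only [Matrix.updateRow_apply, haj, if_pos rfl]
      exact measurable_const
    · simp only [Matrix.updateRow_apply, if_neg haj]
      exact hf a b

lemma meas_mul {a b c : Type*} [Fintype b] {f : Ω → Matrix a b ℂ} {g : Ω → Matrix b c ℂ}
    (hf : ∀ i j, Measurable fun ω => f ω i j) (hg : ∀ i j, Measurable fun ω => g ω i j) :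
    ∀ i j, Measurable fun ω => (f ω * g ω) i j := by
  intro i j
  simp only [Matrix.mul_apply]
  exact Finset.measurable_sum _ fun l _ => (hf i l).mul (hg l j)

lemma integrable_of_bound {μ : Measure Ω} [IsFiniteMeasure μ] {f : Ω → ℂ} (hm : Measurable f)
    (b : ℝ) (hb : ∀ ω, ‖f ω‖ ≤ b) : Integrable f μ :=
  (integrable_const b).mono' hm.aestronglyMeasurable (Filter.Eventually.of_forall hb)

lemma quadform_eq' {n : Type*} [Fintype n] (M : Matrix n n ℂ) (x : n → ℂ) :
    dotProduct (star x) (M *ᵥ x) = ∑ i, ∑ j, star (x i) * M i j * x j := by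
  simp only [dotProduct, mulVec, Pi.star_apply, Finset.mul_sum, mul_assoc]

lemma intMat_quadform {n : Type*} [Fintype n] {μ : Measure Ω} {f : Ω → Matrix n n ℂ}
    (hint : ∀ i j, Integrable (fun ω => f ω i j) μ) (x : n → ℂ) :
    dotProduct (star x) (intMat μ f *ᵥ x) = ∫ ω, dotProduct (star x) (f ω *ᵥ x) ∂μ := by
  rw [quadform_eq']
  have e : ∀ ω : Ω, dotProduct (star x) (f ω *ᵥ x) = ∑ i, ∑ j, star (x i) * f ω i j * x j :=
    fun ω => quadform_eq' _ x
  simp only [e]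
  rw [integral_finset_sum _ (fun i _ =>
    integrable_finset_sum _ (fun j _ => ((hint i j).const_mul _).mul_const _))]
  refine Finset.sum_congr rfl fun i _ => ?_
  rw [integral_finset_sum _ (fun j _ => ((hint i j).const_mul _).mul_const _)]
  refine Finset.sum_congr rfl fun j _ => ?_
  have : (fun ω => star (x i) * f ω i j * x j) = fun ω => star (x i) * (f ω i j * x j) := by
    funext ω; ring
  rw [this, integral_const_mul, integral_mul_const]
  show star (x i) * (intMat μ f) i j * x j = _
  simp only [intMat, Matrix.of_apply]
  ring

lemma complex_integral_nonneg {μ : Measure Ω} {f : Ω → ℂ} (hint : Integrable f μ)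
    (h : ∀ ω, 0 ≤ f ω) : 0 ≤ ∫ ω, f ω ∂μ := by
  rw [Complex.nonneg_iff]
  constructor
  · have e := integral_re hint (𝕜 := ℂ)
    simp only [RCLike.re_to_complex] at e
    rw [← e]
    exact integral_nonneg fun ω => (Complex.nonneg_iff.mp (h ω)).1
  · have e := integral_im hint (𝕜 := ℂ)
    simp only [RCLike.im_to_complex] at e
    rw [← e]
    have : ∀ ω, (f ω).im = 0 := fun ω => ((Complex.nonneg_iff.mp (h ω)).2).symm
    simp [this]

lemma complex_integral_pos {μ : Measure Ω} [IsProbabilityMeasure μ] {f : Ω → ℂ}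
    (hint : Integrable f μ) (h : ∀ ω, 0 < f ω) : 0 < ∫ ω, f ω ∂μ := by
  rw [Complex.pos_iff]
  constructor
  · have e := integral_re hint (𝕜 := ℂ)
    simp only [RCLike.re_to_complex] at e
    rw [← e]
    have hre : ∀ ω, 0 < (f ω).re := fun ω => (Complex.pos_iff.mp (h ω)).1
    rw [integral_pos_iff_support_of_nonneg (fun ω => (hre ω).le) hint.re]
    have e2 : Function.support (fun ω => (f ω).re) = Set.univ := by
      apply Set.eq_univ_of_forall
      intro ω
      exact (hre ω).ne'
    rw [e2, measure_univ]
    norm_num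
  · have e := integral_im hint (𝕜 := ℂ)
    simp only [RCLike.im_to_complex] at e
    rw [← e]
    have : ∀ ω, (f ω).im = 0 := fun ω => ((Complex.pos_iff.mp (h ω)).2).symm
    simp [this]



section IntMatStruct

variable {Ω : Type*} [MeasurableSpace Ω] {n : Type*} [Fintype n] [DecidableEq n]
  {μ : Measure Ω} [IsProbabilityMeasure μ]

lemma intMat_herm {f : Ω → Matrix n n ℂ} (hint : ∀ i j, Integrable (fun ω => f ω i j) μ)
    (hherm : ∀ ω, (f ω).IsHermitian) : (intMat μ f).IsHermitian := by
  show (intMat μ f)ᴴ = intMat μ f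
  ext i j
  show star ((intMat μ f) j i) = (intMat μ f) i j
  show star (∫ ω, f ω j i ∂μ) = ∫ ω, f ω i j ∂μ
  have e := integral_conj (μ := μ) (f := fun ω => f ω j i)
  rw [show (star (∫ ω, f ω j i ∂μ)) = (starRingEnd ℂ) (∫ ω, f ω j i ∂μ) from rfl, ← e]
  congr 1
  funext ω
  calc (starRingEnd ℂ) (f ω j i) = (f ω)ᴴ i j := rfl
    _ = f ω i j := by rw [(hherm ω).eq]

lemma intMat_psd {f : Ω → Matrix n n ℂ} (hmeas : ∀ i j, Measurable fun ω => f ω i j)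
    {b : ℝ} (hb : ∀ ω i j, ‖f ω i j‖ ≤ b) (hpsd : ∀ ω, (f ω).PosSemidef) :
    (intMat μ f).PosSemidef := by
  have hint : ∀ i j, Integrable (fun ω => f ω i j) μ :=
    fun i j => integrable_of_bound (hmeas i j) b (fun ω => hb ω i j)
  refine Matrix.PosSemidef.of_dotProduct_mulVec_nonneg (intMat_herm hint (fun ω => (hpsd ω).1)) fun x => ?_
  rw [intMat_quadform hint x]
  apply complex_integral_nonneg
  · -- integrability of the quadratic form
    have e : ∀ ω : Ω, dotProduct (star x) (f ω *ᵥ x) = ∑ i, ∑ j, star (x i) * f ω i j * x j :=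
      fun ω => quadform_eq _ x
    simp only [e]
    exact integrable_finset_sum _ (fun i _ =>
      integrable_finset_sum _ (fun j _ => ((hint i j).const_mul _).mul_const _))
  · exact fun ω => (hpsd ω).dotProduct_mulVec_nonneg x

lemma intMat_pd {f : Ω → Matrix n n ℂ} (hmeas : ∀ i j, Measurable fun ω => f ω i j)
    {b : ℝ} (hb : ∀ ω i j, ‖f ω i j‖ ≤ b) (hpd : ∀ ω, (f ω).PosDef) :
    (intMat μ f).PosDef := by
  have hint : ∀ i j, Integrable (fun ω => f ω i j) μ :=
    fun i j => integrable_of_bound (hmeas i j) b (fun ω => hb ω i j)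
  refine Matrix.PosDef.of_dotProduct_mulVec_pos (intMat_herm hint (fun ω => (hpd ω).1)) fun x hx => ?_
  rw [intMat_quadform hint x]
  apply complex_integral_pos
  · have e : ∀ ω : Ω, dotProduct (star x) (f ω *ᵥ x) = ∑ i, ∑ j, star (x i) * f ω i j * x j :=
      fun ω => quadform_eq _ x
    simp only [e]
    exact integrable_finset_sum _ (fun i _ =>
      integrable_finset_sum _ (fun j _ => ((hint i j).const_mul _).mul_const _))
  · exact fun ω => (hpd ω).dotProduct_mulVec_pos hx

lemma intMat_one_sub_mul (C : Matrix n n ℂ) {f : Ω → Matrix n n ℂ}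
    (hint : ∀ i j, Integrable (fun ω => f ω i j) μ) :
    intMat μ (fun ω => 1 - C * f ω) = 1 - C * intMat μ f := by
  ext i j
  show (∫ ω, ((1:Matrix n n ℂ) - C * f ω) i j ∂μ) = ((1:Matrix n n ℂ) - C * intMat μ f) i j
  have e : ∀ ω : Ω, ((1:Matrix n n ℂ) - C * f ω) i j
      = (1:Matrix n n ℂ) i j - ∑ l, C i l * f ω l j := by
    intro ω
    simp [Matrix.sub_apply, Matrix.mul_apply]
  simp only [e]
  rw [integral_sub (integrable_const _)
    (integrable_finset_sum _ (fun l _ => (hint l j).const_mul _))]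
  rw [integral_const, integral_finset_sum _ (fun l _ => (hint l j).const_mul _)]
  simp only [measure_univ, ENNReal.toReal_one, probReal_univ, one_smul]
  congr 1
  · simp [Matrix.sub_apply, Matrix.mul_apply, intMat]
    exact Finset.sum_congr rfl fun l _ => integral_const_mul _ _

lemma intMat_mul_left (C : Matrix n n ℂ) {f : Ω → Matrix n n ℂ}
    (hint : ∀ i j, Integrable (fun ω => f ω i j) μ) :
    intMat μ (fun ω => C * f ω) = C * intMat μ f := by
  ext i j
  show (∫ ω, (C * f ω) i j ∂μ) = (C * intMat μ f) i j
  have e : ∀ ω : Ω, (C * f ω) i j = ∑ l, C i l * f ω l j := by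
    intro ω; simp [Matrix.mul_apply]
  simp only [e]
  rw [integral_finset_sum _ (fun l _ => (hint l j).const_mul _)]
  simp only [Matrix.mul_apply, intMat, Matrix.of_apply]
  exact Finset.sum_congr rfl fun l _ => integral_const_mul _ _

end IntMatStruct


section Step

def GoodM {n : Type*} [Fintype n] [DecidableEq n] (A : Matrix n n ℂ) : Prop := A.PosSemidef ∧ (1 - A).PosDef

lemma goodM_zero {n : Type*} [Fintype n] [DecidableEq n] : GoodM (0 : Matrix n n ℂ) :=
  ⟨Matrix.PosSemidef.zero, by rw [sub_zero]; exact Matrix.PosDef.one⟩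

variable {kk : ℕ}

lemma step_pointwise {A B : Matrix (Fin kk) (Fin kk) ℂ} (hA : GoodM A) (hB : GoodM B) :
    ((((1-A)⁻¹ + (1-B)⁻¹ - 1)⁻¹).PosDef) ∧
    (1 - ((1-A)⁻¹ + (1-B)⁻¹ - 1)⁻¹).PosSemidef ∧
    B * Vof A B = 1 - (1-A)⁻¹ * ((1-A)⁻¹ + (1-B)⁻¹ - 1)⁻¹ ∧
    Vbarof A B = (1-A)⁻¹ * ((1-A)⁻¹ + (1-B)⁻¹ - 1)⁻¹ := by
  obtain ⟨hA1, hA2⟩ := hA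
  obtain ⟨hB1, hB2⟩ := hB
  set C := 1 - A with hC
  set D := 1 - B with hD
  have hCpd : C.PosDef := hA2
  have hDpd : D.PosDef := hB2
  have hCiA : (C⁻¹ * A).PosSemidef := pd_inv_mul_psd hA1 hA2
  have hDiB : (D⁻¹ * B).PosSemidef := pd_inv_mul_psd hB1 hB2
  have hCiA' : C⁻¹ * A = C⁻¹ - 1 := by
    have h1 : C⁻¹ * C = 1 := inv_mul_pd hCpd
    have hAC : A = 1 - C := by rw [hC, sub_sub_cancel]
    calc C⁻¹ * A = C⁻¹ * (1 - C) := by rw [← hAC]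
      _ = C⁻¹ * 1 - C⁻¹ * C := by noncomm_ring
      _ = C⁻¹ - 1 := by rw [h1, mul_one]
  have hDiB' : D⁻¹ * B = D⁻¹ - 1 := by
    have h1 : D⁻¹ * D = 1 := inv_mul_pd hDpd
    have hBD : B = 1 - D := by rw [hD, sub_sub_cancel]
    calc D⁻¹ * B = D⁻¹ * (1 - D) := by rw [← hBD]
      _ = D⁻¹ * 1 - D⁻¹ * D := by noncomm_ring
      _ = D⁻¹ - 1 := by rw [h1, mul_one]
  set Z := C⁻¹ + D⁻¹ - 1 with hZ
  have hZeq : Z = C⁻¹ * A + D⁻¹ := by rw [hZ, hCiA']; abel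
  have hZpd : Z.PosDef := by rw [hZeq]; exact Matrix.PosDef.posSemidef_add hCiA hDpd.inv
  have hZsub : (Z - 1).PosSemidef := by
    have e : Z - 1 = C⁻¹ * A + D⁻¹ * B := by rw [hZ, hCiA', hDiB']; abel
    rw [e]; exact hCiA.add hDiB
  have hX : (Z⁻¹).PosDef := hZpd.inv
  have h1X : (1 - Z⁻¹).PosSemidef := one_sub_inv_psd hZpd hZsub
  have hfact : 1 - A * B = C * Z * D := by
    have e : C * (C⁻¹ + D⁻¹ - 1) * D = (C * C⁻¹) * D + C * (D⁻¹ * D) - C * D := by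
      noncomm_ring
    rw [hZ, e, mul_inv_pd hCpd, inv_mul_pd hDpd, one_mul, mul_one, hC, hD]
    noncomm_ring
  have hVof : Vof A B = D⁻¹ * Z⁻¹ := by
    show (1 - A * B)⁻¹ * (1 - A) = D⁻¹ * Z⁻¹
    rw [hfact, Matrix.mul_inv_rev, Matrix.mul_inv_rev, ← hC]
    calc D⁻¹ * (Z⁻¹ * C⁻¹) * C = D⁻¹ * Z⁻¹ * (C⁻¹ * C) := by noncomm_ring
      _ = D⁻¹ * Z⁻¹ := by rw [inv_mul_pd hCpd, mul_one]
  have hZX : C⁻¹ * Z⁻¹ + D⁻¹ * Z⁻¹ - Z⁻¹ = 1 := by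
    calc C⁻¹ * Z⁻¹ + D⁻¹ * Z⁻¹ - Z⁻¹ = (C⁻¹ + D⁻¹ - 1) * Z⁻¹ := by noncomm_ring
      _ = Z * Z⁻¹ := by rw [← hZ]
      _ = 1 := mul_inv_pd hZpd
  have hBV : B * Vof A B = 1 - C⁻¹ * Z⁻¹ := by
    rw [hVof]
    have hBD : B = 1 - D := by rw [hD, sub_sub_cancel]
    calc B * (D⁻¹ * Z⁻¹) = (1 - D) * (D⁻¹ * Z⁻¹) := by rw [← hBD]
      _ = D⁻¹ * Z⁻¹ - (D * D⁻¹) * Z⁻¹ := by noncomm_ring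
      _ = D⁻¹ * Z⁻¹ - Z⁻¹ := by rw [mul_inv_pd hDpd, one_mul]
      _ = 1 - C⁻¹ * Z⁻¹ := by rw [← hZX]; abel
  have hVbar : Vbarof A B = C⁻¹ * Z⁻¹ := by
    show 1 - B * Vof A B = _
    rw [hBV, sub_sub_cancel]
  exact ⟨hX, h1X, hBV, hVbar⟩

lemma step_good {Ω : Type*} [MeasurableSpace Ω] (μ : Measure Ω) [IsProbabilityMeasure μ]
    {A : Matrix (Fin kk) (Fin kk) ℂ} (hA : GoodM A) {B : Ω → Matrix (Fin kk) (Fin kk) ℂ}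
    (hB : ∀ ω, GoodM (B ω))
    (hmeas : ∀ i j, Measurable fun ω => B ω i j) :
    GoodM (intMat μ (fun ω => B ω * Vof A (B ω)) + A * intMat μ (fun ω => Vbarof A (B ω))) := by
  classical
  set X : Ω → Matrix (Fin kk) (Fin kk) ℂ := fun ω => ((1-A)⁻¹ + (1 - B ω)⁻¹ - 1)⁻¹ with hXdef
  have hpt := fun ω => step_pointwise hA (hB ω)
  have hXpd : ∀ ω, (X ω).PosDef := fun ω => (hpt ω).1
  have hX1 : ∀ ω, (1 - X ω).PosSemidef := fun ω => (hpt ω).2.1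
  have hXm : ∀ i j, Measurable fun ω => X ω i j := by
    apply meas_inv
    intro i j
    have h1 : ∀ i j, Measurable fun ω => ((1:Matrix (Fin kk) (Fin kk) ℂ) - B ω) i j := by
      intro i j
      simp only [Matrix.sub_apply]
      exact measurable_const.sub (hmeas i j)
    have h2 := meas_inv h1
    simp only [Matrix.sub_apply, Matrix.add_apply]
    exact (measurable_const.add (h2 i j)).sub measurable_const
  have hXb : ∀ ω i j, ‖X ω i j‖ ≤ 1 := fun ω i j =>
    entry_norm_le_one (hXpd ω).posSemidef (hX1 ω) i j
  have hint : ∀ i j, Integrable (fun ω => X ω i j) μ :=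
    fun i j => integrable_of_bound (hXm i j) 1 (fun ω => hXb ω i j)
  have e1 : (fun ω => B ω * Vof A (B ω)) = fun ω => 1 - (1-A)⁻¹ * X ω :=
    funext fun ω => (hpt ω).2.2.1
  have e2 : (fun ω => Vbarof A (B ω)) = fun ω => (1-A)⁻¹ * X ω :=
    funext fun ω => (hpt ω).2.2.2
  rw [e1, e2, intMat_one_sub_mul _ hint, intMat_mul_left _ hint]
  set E := intMat μ X with hE
  have hsum : (1 - (1-A)⁻¹ * E) + A * ((1-A)⁻¹ * E) = 1 - E := by
    have h1 : (1 - A) * (1-A)⁻¹ = 1 := mul_inv_pd hA.2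
    calc (1 - (1-A)⁻¹ * E) + A * ((1-A)⁻¹ * E)
        = 1 - ((1 - A) * (1-A)⁻¹) * E := by noncomm_ring
      _ = 1 - E := by rw [h1, one_mul]
  rw [hsum]
  constructor
  · rw [show (1:Matrix (Fin kk) (Fin kk) ℂ) - E = 1 - 1 * E by rw [one_mul],
      ← intMat_one_sub_mul (1 : Matrix (Fin kk) (Fin kk) ℂ) hint]
    apply intMat_psd (b := 2)
    · intro i j
      simp only [Matrix.sub_apply, Matrix.mul_apply]
      exact measurable_const.sub (Finset.measurable_sum _ fun l _ =>
        (measurable_const.mul (hXm l j)))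
    · intro ω i j
      have e : (1 - 1 * X ω : Matrix (Fin kk) (Fin kk) ℂ) i j
          = (1 : Matrix (Fin kk) (Fin kk) ℂ) i j - X ω i j := by
        rw [one_mul, Matrix.sub_apply]
      rw [e]
      refine (norm_sub_le _ _).trans ?_
      have h1 : ‖(1:Matrix (Fin kk) (Fin kk) ℂ) i j‖ ≤ 1 := by
        by_cases hij : i = j <;> simp [Matrix.one_apply, hij]
      linarith [hXb ω i j]
    · intro ω
      rw [one_mul]
      exact hX1 ω
  · rw [sub_sub_cancel]
    exact intMat_pd hXm hXb hXpd

end Step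

section Rec

variable {Ω : Type*} [MeasurableSpace Ω]

lemma goodM_piRec (μ : Measure Ω) [IsProbabilityMeasure μ]
    {K : ℕ} {Pf : ℕ → Ω → Matrix (Fin K) (Fin K) ℂ} (hPf : ∀ m ω, GoodM (Pf m ω))
    (hmeas : ∀ m i j, Measurable fun ω => Pf m ω i j) (M : ℕ) :
    ∀ m, GoodM (PiRec μ Pf M m) := by
  have key : ∀ j m, M ≤ m + j → GoodM (PiRec μ Pf M m) := by
    intro j
    induction j with
    | zero =>
      intro m hm
      rw [PiRec, dif_pos (by omega)]
      exact goodM_zero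
    | succ j ih =>
      intro m hm
      by_cases hMm : M ≤ m
      · rw [PiRec, dif_pos hMm]
        exact goodM_zero
      · rw [PiRec, dif_neg hMm]
        exact step_good μ (ih (m+1) (by omega)) (fun ω => hPf (m+1) ω) (hmeas (m+1))
  intro m
  exact key M m (by omega)

lemma meas_Pof {K N : ℕ} (w : Fin K → ℝ) (P : ℝ) (Ψ : Matrix (Fin N) (Fin N) ℂ)
    {H : Ω → Matrix (Fin K) (Fin N) ℂ} (hH : ∀ i j, Measurable fun ω => H ω i j) :
    ∀ i j, Measurable fun ω => Pof w P Ψ (H ω) i j := by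
  have hHT : ∀ i j, Measurable fun ω => (H ω)ᴴ i j := by
    intro i j
    show Measurable fun ω => star (H ω j i)
    exact Complex.continuous_conj.measurable.comp (hH j i)
  have m1 : ∀ i j, Measurable fun ω => ((H ω)ᴴ * diagC w) i j :=
    meas_mul (f := fun ω => (H ω)ᴴ) (g := fun _ => diagC w) hHT (fun _ _ => measurable_const)
  have m2 : ∀ i j, Measurable fun ω => ((H ω)ᴴ * diagC w * H ω) i j :=
    meas_mul (f := fun ω => (H ω)ᴴ * diagC w) (g := H) m1 hH
  have hR : ∀ i j, Measurable fun ω =>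
      ((H ω)ᴴ * diagC w * H ω + Ψ + (P⁻¹ : ℂ) • (1 : Matrix (Fin N) (Fin N) ℂ)) i j := by
    intro i j
    simp only [Matrix.add_apply]
    exact ((m2 i j).add measurable_const).add measurable_const
  have m3 := meas_inv hR
  have m4 : ∀ i j, Measurable fun ω => ((H ω)ᴴ * sqrtDiag w) i j :=
    meas_mul (f := fun ω => (H ω)ᴴ) (g := fun _ => sqrtDiag w) hHT (fun _ _ => measurable_const)
  have m5 : ∀ i j, Measurable fun ω => (Tof w P Ψ (H ω)) i j :=
    meas_mul (f := fun ω => ((H ω)ᴴ * diagC w * H ω + Ψ + (P⁻¹ : ℂ) • 1)⁻¹)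
      (g := fun ω => (H ω)ᴴ * sqrtDiag w) m3 m4
  have m6 : ∀ i j, Measurable fun ω => (sqrtDiag w * H ω) i j :=
    meas_mul (f := fun _ => sqrtDiag w) (g := H) (fun _ _ => measurable_const) hH
  exact meas_mul (f := fun ω => sqrtDiag w * H ω) (g := fun ω => Tof w P Ψ (H ω)) m6 m5

lemma goodM_Pof {K N : ℕ} (w : Fin K → ℝ) (hw0 : ∀ i, 0 ≤ w i) {P : ℝ} (hP : 0 < P)
    {Ψ : Matrix (Fin N) (Fin N) ℂ} (hΨ : Ψ.PosSemidef) (Hh : Matrix (Fin K) (Fin N) ℂ) :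
    GoodM (Pof w P Ψ Hh) := by
  set S := sqrtDiag w with hSdef
  have hS : Sᴴ = S := by
    rw [hSdef, sqrtDiag, Matrix.diagonal_conjTranspose]
    refine congrArg Matrix.diagonal (funext fun i => ?_)
    exact Complex.conj_ofReal _
  have hSS : S * S = diagC w := by
    rw [hSdef, sqrtDiag, diagC, Matrix.diagonal_mul_diagonal]
    refine congrArg Matrix.diagonal (funext fun i => ?_)
    rw [← Complex.ofReal_mul, Real.mul_self_sqrt (hw0 i)]
  set Bm := S * Hh with hBm
  have hBmH : Bmᴴ = Hhᴴ * S := by rw [hBm, Matrix.conjTranspose_mul, hS]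
  have hBH : Hhᴴ * diagC w * Hh = Bmᴴ * Bm := by
    rw [hBmH, hBm, ← hSS]
    simp only [Matrix.mul_assoc]
  set c : ℂ := (P⁻¹ : ℂ) with hc
  have hcI : (c • (1 : Matrix (Fin N) (Fin N) ℂ)).PosDef := by
    rw [Matrix.smul_one_eq_diagonal]
    exact Matrix.PosDef.diagonal fun _ => by
      rw [hc]
      exact_mod_cast Complex.zero_lt_real.mpr (inv_pos.mpr hP)
  have hΨ' : (Ψ + c • (1 : Matrix (Fin N) (Fin N) ℂ)).PosDef :=
    Matrix.PosDef.posSemidef_add hΨ hcI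
  set R := Bmᴴ * Bm + (Ψ + c • (1 : Matrix (Fin N) (Fin N) ℂ)) with hR
  have hRpd : R.PosDef :=
    Matrix.PosDef.posSemidef_add (Matrix.posSemidef_conjTranspose_mul_self Bm) hΨ'
  have hRe : Hhᴴ * diagC w * Hh + Ψ + c • (1 : Matrix (Fin N) (Fin N) ℂ) = R := by
    rw [hBH, hR, add_assoc]
  have hPof : Pof w P Ψ Hh = Bm * R⁻¹ * Bmᴴ := by
    show S * Hh * ((Hhᴴ * diagC w * Hh + Ψ + c • 1)⁻¹ * (Hhᴴ * S)) = Bm * R⁻¹ * Bmᴴ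
    rw [hRe, ← hBmH, ← hBm, hBm]
    simp only [Matrix.mul_assoc]
  constructor
  · rw [hPof]
    exact hRpd.inv.posSemidef.mul_mul_conjTranspose_same Bm
  · set Y := Ψ + c • (1 : Matrix (Fin N) (Fin N) ℂ) with hY
    have hM2 : (1 + Bm * Y⁻¹ * Bmᴴ).PosDef :=
      Matrix.PosDef.add_posSemidef Matrix.PosDef.one
        (hΨ'.inv.posSemidef.mul_mul_conjTranspose_same Bm)
    have hBB : Bmᴴ * Bm = R - Y := by rw [hR]; abel
    have h1 : Bm * R⁻¹ * (Bmᴴ * Bm) * (Y⁻¹ * Bmᴴ)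
        = Bm * Y⁻¹ * Bmᴴ - Bm * R⁻¹ * Bmᴴ := by
      rw [hBB, Matrix.mul_sub, Matrix.sub_mul]
      simp only [Matrix.mul_assoc]
      rw [← Matrix.mul_assoc R⁻¹ R, inv_mul_pd hRpd, Matrix.one_mul,
        ← Matrix.mul_assoc Y Y⁻¹, mul_inv_pd hΨ', Matrix.one_mul]
    have key : (1 - Bm * R⁻¹ * Bmᴴ) * (1 + Bm * Y⁻¹ * Bmᴴ) = 1 := by
      rw [Matrix.sub_mul, Matrix.mul_add, Matrix.mul_add, Matrix.one_mul, Matrix.mul_one]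
      have h2 : Bm * R⁻¹ * Bmᴴ * (Bm * Y⁻¹ * Bmᴴ)
          = Bm * R⁻¹ * (Bmᴴ * Bm) * (Y⁻¹ * Bmᴴ) := by
        simp only [Matrix.mul_assoc]
      rw [h2, h1]
      simp only [Matrix.one_mul, Matrix.mul_one]
      abel
    have hinv : (1 + Bm * Y⁻¹ * Bmᴴ)⁻¹ = 1 - Bm * R⁻¹ * Bmᴴ :=
      Matrix.inv_eq_left_inv key
    have e3 : 1 - Pof w P Ψ Hh = (1 + Bm * Y⁻¹ * Bmᴴ)⁻¹ := by
      rw [hinv, hPof]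
    rw [e3]
    exact hM2.inv

end Rec

section Solve

variable {n : Type*} [Fintype n] [DecidableEq n]

lemma solve {ι : Type*} [DecidableEq ι] (Qk : Finset ι)
    (Pi0 : ι → Matrix n n ℂ) (hGood : ∀ q, GoodM (Pi0 q)) (e0 : n → ℂ) :
    ∃! c : ι → n → ℂ,
      (∀ q ∈ Qk, c q + ∑ j ∈ Qk.erase q, Pi0 j *ᵥ c j = e0) ∧ ∀ q ∉ Qk, c q = 0 := by
  classical
  set T : ι → Matrix n n ℂ := fun q => (1 - Pi0 q)⁻¹ * Pi0 q with hT
  have hTpsd : ∀ q, (T q).PosSemidef := fun q => pd_inv_mul_psd (hGood q).1 (hGood q).2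
  set Ts : Matrix n n ℂ := ∑ j ∈ Qk, T j with hTs
  have hTs_psd : Ts.PosSemidef := by
    rw [hTs]
    exact Finset.sum_induction _ _ (fun a b ha hb => ha.add hb) Matrix.PosSemidef.zero
      (fun j _ => hTpsd j)
  have hG : (1 + Ts).PosDef := Matrix.PosDef.add_posSemidef Matrix.PosDef.one hTs_psd
  have hcomm : ∀ q, Pi0 q * (1 - Pi0 q)⁻¹ = T q := fun q =>
    (commute_inv_left (hGood q).2 (by noncomm_ring)).symm
  have hsum_mulVec : ∀ (s : Finset ι) (F : ι → Matrix n n ℂ) (v : n → ℂ),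
      (∑ j ∈ s, F j) *ᵥ v = ∑ j ∈ s, F j *ᵥ v := by
    intro s F v
    induction s using Finset.induction_on with
    | empty => simp [Matrix.zero_mulVec]
    | insert _ _ hnotmem ih =>
      rw [Finset.sum_insert hnotmem, Finset.sum_insert hnotmem, Matrix.add_mulVec, ih]
  set S : n → ℂ := (1 + Ts)⁻¹ *ᵥ (Ts *ᵥ e0) with hS
  have hTs_e : Ts *ᵥ (e0 - S) = S := by
    have h1 : (1 + Ts) *ᵥ S = Ts *ᵥ e0 := by
      rw [hS, Matrix.mulVec_mulVec, mul_inv_pd hG, Matrix.one_mulVec]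
    have h2 : S + Ts *ᵥ S = Ts *ᵥ e0 := by
      rw [← h1, Matrix.add_mulVec, Matrix.one_mulVec]
    rw [Matrix.mulVec_sub, ← h2]
    abel
  set csol : ι → n → ℂ :=
    fun q => if q ∈ Qk then (1 - Pi0 q)⁻¹ *ᵥ (e0 - S) else 0 with hcsol
  have hPiC : ∀ q ∈ Qk, Pi0 q *ᵥ csol q = T q *ᵥ (e0 - S) := by
    intro q hq
    rw [hcsol]
    simp only [if_pos hq]
    rw [Matrix.mulVec_mulVec, hcomm q]
  have hsumQk : ∑ j ∈ Qk, Pi0 j *ᵥ csol j = S := by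
    rw [Finset.sum_congr rfl hPiC, ← hsum_mulVec, ← hTs, hTs_e]
  refine ⟨csol, ⟨?_, ?_⟩, ?_⟩
  · intro q hq
    have hcq : csol q = (1 - Pi0 q)⁻¹ *ᵥ (e0 - S) := by rw [hcsol]; simp only [if_pos hq]
    calc csol q + ∑ j ∈ Qk.erase q, Pi0 j *ᵥ csol j
        = csol q + (S - Pi0 q *ᵥ csol q) := by
          rw [Finset.sum_erase_eq_sub hq, hsumQk]
      _ = (csol q - Pi0 q *ᵥ csol q) + S := by abel
      _ = (1 - Pi0 q) *ᵥ csol q + S := by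
          rw [Matrix.sub_mulVec, Matrix.one_mulVec]
      _ = (e0 - S) + S := by
          rw [hcq, Matrix.mulVec_mulVec, mul_inv_pd (hGood q).2, Matrix.one_mulVec]
      _ = e0 := by abel
  · intro q hq
    rw [hcsol]
    simp only [if_neg hq]
  · intro c hc
    obtain ⟨hc1, hc2⟩ := hc
    set d : ι → n → ℂ := fun q => c q - csol q with hd
    have hd0 : ∀ q ∉ Qk, d q = 0 := by
      intro q hq
      rw [hd]
      simp only
      rw [hc2 q hq, hcsol]
      simp only [if_neg hq, sub_zero]
    set Td : n → ℂ := ∑ j ∈ Qk, Pi0 j *ᵥ d j with hTd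
    have hdq : ∀ q ∈ Qk, d q + (Td - Pi0 q *ᵥ d q) = 0 := by
      intro q hq
      have e1 := hc1 q hq
      have e2 : csol q + ∑ j ∈ Qk.erase q, Pi0 j *ᵥ csol j = e0 := by
        calc csol q + ∑ j ∈ Qk.erase q, Pi0 j *ᵥ csol j
            = csol q + (S - Pi0 q *ᵥ csol q) := by
              rw [Finset.sum_erase_eq_sub hq, hsumQk]
          _ = (csol q - Pi0 q *ᵥ csol q) + S := by abel
          _ = (1 - Pi0 q) *ᵥ csol q + S := by
              rw [Matrix.sub_mulVec, Matrix.one_mulVec]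
          _ = (e0 - S) + S := by
              rw [show csol q = (1 - Pi0 q)⁻¹ *ᵥ (e0 - S) by rw [hcsol]; simp only [if_pos hq],
                Matrix.mulVec_mulVec, mul_inv_pd (hGood q).2, Matrix.one_mulVec]
          _ = e0 := by abel
      have e3 : d q + ∑ j ∈ Qk.erase q, Pi0 j *ᵥ d j = 0 := by
        have : ∀ j, Pi0 j *ᵥ d j = Pi0 j *ᵥ c j - Pi0 j *ᵥ csol j := by
          intro j
          rw [hd]
          simp only
          rw [Matrix.mulVec_sub]
        simp only [this, Finset.sum_sub_distrib]
        rw [hd]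
        simp only
        calc c q - csol q + (∑ j ∈ Qk.erase q, Pi0 j *ᵥ c j
              - ∑ j ∈ Qk.erase q, Pi0 j *ᵥ csol j)
            = (c q + ∑ j ∈ Qk.erase q, Pi0 j *ᵥ c j)
              - (csol q + ∑ j ∈ Qk.erase q, Pi0 j *ᵥ csol j) := by abel
          _ = 0 := by rw [e1, e2, sub_self]
      rw [Finset.sum_erase_eq_sub hq] at e3
      rw [hTd]
      exact e3
  -- continue below

    have hdval : ∀ q ∈ Qk, d q = (1 - Pi0 q)⁻¹ *ᵥ (-Td) := by
      intro q hq
      have e := hdq q hq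
      have e' : (1 - Pi0 q) *ᵥ d q = -Td := by
        rw [Matrix.sub_mulVec, Matrix.one_mulVec]
        have : d q - Pi0 q *ᵥ d q + Td = 0 := by rw [← e]; abel
        have := eq_neg_of_add_eq_zero_left this
        rw [this]
      calc d q = 1 *ᵥ d q := by rw [Matrix.one_mulVec]
        _ = ((1 - Pi0 q)⁻¹ * (1 - Pi0 q)) *ᵥ d q := by rw [inv_mul_pd (hGood q).2]
        _ = (1 - Pi0 q)⁻¹ *ᵥ ((1 - Pi0 q) *ᵥ d q) := by rw [Matrix.mulVec_mulVec]
        _ = (1 - Pi0 q)⁻¹ *ᵥ (-Td) := by rw [e']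
    have hTd0 : Td = 0 := by
      have e : Td = -(Ts *ᵥ Td) := by
        rw [hTd]
        calc ∑ j ∈ Qk, Pi0 j *ᵥ d j
            = ∑ j ∈ Qk, T j *ᵥ (-Td) := by
              refine Finset.sum_congr rfl fun j hj => ?_
              rw [hdval j hj, Matrix.mulVec_mulVec, hcomm j]
          _ = (∑ j ∈ Qk, T j) *ᵥ (-Td) := by rw [hsum_mulVec]
          _ = -(Ts *ᵥ Td) := by rw [← hTs, Matrix.mulVec_neg]
      have e2 : (1 + Ts) *ᵥ Td = 0 := by
        rw [Matrix.add_mulVec, Matrix.one_mulVec]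
        nth_rewrite 1 [e]
        exact neg_add_cancel _
      calc Td = 1 *ᵥ Td := by rw [Matrix.one_mulVec]
        _ = ((1 + Ts)⁻¹ * (1 + Ts)) *ᵥ Td := by rw [inv_mul_pd hG]
        _ = (1 + Ts)⁻¹ *ᵥ ((1 + Ts) *ᵥ Td) := by rw [Matrix.mulVec_mulVec]
        _ = 0 := by rw [e2, Matrix.mulVec_zero]
    have hdz : ∀ q, d q = 0 := by
      intro q
      by_cases hq : q ∈ Qk
      · rw [hdval q hq, hTd0, neg_zero, Matrix.mulVec_zero]
      · exact hd0 q hq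
    funext q
    have hz := hdz q
    rw [hd] at hz
    exact sub_eq_zero.mp hz

end Solve

end St11

/-- In the multi-stripe setting, with `Π_{q,0}` produced by the backward
recursion from mutually independent square-integrable estimates, for every nonempty subset
`𝒬_k ⊆ {1,…,Q}` and every standard basis vector `e_k`, the linear system
`c_q + ∑_{j ∈ 𝒬_k∖{q}} Π_{j,0} c_j = e_k` (for all `q ∈ 𝒬_k`) has a unique solution. -/
theorem statement11
    {Ω : Type*} [mΩ : MeasurableSpace Ω] (μ : Measure Ω) [IsProbabilityMeasure μ]
    {K N Q : ℕ} (M : ℕ) (hM : 1 ≤ M)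
    (w : Fin K → ℝ) (hw0 : ∀ i, 0 ≤ w i) (hw1 : ∑ i, w i = 1)
    (P : ℝ) (hP : 0 < P)
    (Ψ : Fin Q → ℕ → Matrix (Fin N) (Fin N) ℂ) (hΨ : ∀ q m, (Ψ q m).PosSemidef)
    (Hhat : Fin Q → ℕ → Ω → Matrix (Fin K) (Fin N) ℂ)
    (hHmeas : ∀ q m i j, Measurable fun ω => Hhat q m ω i j)
    (hHL2 : ∀ q, ∀ m ∈ Finset.Icc 1 M, ∀ i j, MemLp (fun ω => Hhat q m ω i j) 2 μ)
    (hindep : iIndep (fun qm : Fin Q × Fin M => sigGen (Hhat qm.1 (qm.2.1 + 1))) μ) :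
    ∀ Qk : Finset (Fin Q), Qk.Nonempty → ∀ k : Fin K,
      ∃! c : Fin Q → Fin K → ℂ,
        (∀ q ∈ Qk, c q + ∑ j ∈ Qk.erase q,
            PiRec μ (PmFun w P (Ψ j) (Hhat j)) M 0 *ᵥ c j = Pi.single k 1) ∧
        ∀ q ∉ Qk, c q = 0 := by
  intro Qk _hQkne k
  classical
  have hGood : ∀ q : Fin Q, St11.GoodM (PiRec μ (PmFun w P (Ψ q) (Hhat q)) M 0) := by
    intro q
    refine St11.goodM_piRec μ (fun m ω => ?_) (fun m i j => ?_) M 0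
    · exact St11.goodM_Pof w hw0 hP (hΨ q m) (Hhat q m ω)
    · exact St11.meas_Pof w P (Ψ q m) (fun i j => hHmeas q m i j) i j
  exact St11.solve Qk (fun j => PiRec μ (PmFun w P (Ψ j) (Hhat j)) M 0) hGood (Pi.single k 1)
end
end

section
/- Let Ĥ : Ω → ℂ^{K×N} be a random matrix, W ∈ ℝ^{K×K} a positive semidefinite diagonal matrix, Ψ : Ω → ℂ^{N×N} a random positive semidefinite Hermitian matrix, and P > 0. Define the random matrix M := W^{1/2}Ĥ (ĤᴴWĤ + Ψ + P^{-1}I)^{-1} ĤᴴW^{1/2} and Π := E[M] (entrywise expectation, well defined since 0 ≼ M ≼ I almost surely). Then Π is Hermitian with 0 ≼ Π and I − Π positive definite, i.e., the operator norm of Π is strictly less than 1. -/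
open MeasureTheory Matrix
open scoped ComplexOrder ENNReal

noncomputable section

/-- The random matrix `M = W^{1/2} Ĥ (Ĥᴴ W Ĥ + Ψ + P⁻¹ I)⁻¹ Ĥᴴ W^{1/2}`. -/
def Mrand {Ω : Type*} {K N : ℕ} (w : Fin K → ℝ) (P : ℝ)
    (Hhat : Ω → Matrix (Fin K) (Fin N) ℂ) (Ψ : Ω → Matrix (Fin N) (Fin N) ℂ)
    (ω : Ω) : Matrix (Fin K) (Fin K) ℂ :=
  sqrtDiag w * Hhat ω * ((Hhat ω)ᴴ * diagC w * Hhat ω + Ψ ω + (P⁻¹ : ℂ) • 1)⁻¹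
    * (Hhat ω)ᴴ * sqrtDiag w

/-! ### Auxiliary lemmas -/

lemma woodbury {m n : Type*} [Fintype m] [Fintype n] [DecidableEq m] [DecidableEq n]
    (B : Matrix m n ℂ) (S : Matrix n n ℂ) (hS : S.PosDef) :
    (B * (Bᴴ * B + S)⁻¹ * Bᴴ).PosSemidef ∧ (1 - B * (Bᴴ * B + S)⁻¹ * Bᴴ).PosDef := by
  obtain ⟨A, hA⟩ : ∃ A, Bᴴ * B + S = A := ⟨_, rfl⟩
  rw [hA]
  have hApd : A.PosDef :=
    hA ▸ Matrix.PosDef.posSemidef_add (Matrix.posSemidef_conjTranspose_mul_self B) hS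
  refine ⟨hApd.inv.posSemidef.mul_mul_conjTranspose_same B, ?_⟩
  have hAinv : A * A⁻¹ = 1 := Matrix.mul_nonsing_inv A hApd.det_pos.ne'.isUnit
  have hSinv : S⁻¹ * S = 1 := Matrix.nonsing_inv_mul S hS.det_pos.ne'.isUnit
  have hT : (1 + B * S⁻¹ * Bᴴ).PosDef :=
    Matrix.PosDef.add_posSemidef Matrix.PosDef.one
      (hS.inv.posSemidef.mul_mul_conjTranspose_same B)
  have key : (1 + B * S⁻¹ * Bᴴ) * (1 - B * A⁻¹ * Bᴴ) = 1 := by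
    have hBB : Bᴴ * B = A - S := by rw [← hA]; abel
    have c1 : B * S⁻¹ * A * A⁻¹ * Bᴴ = B * S⁻¹ * Bᴴ := by
      rw [Matrix.mul_assoc (B * S⁻¹) A, hAinv, Matrix.mul_one]
    have c2 : B * S⁻¹ * S * A⁻¹ * Bᴴ = B * A⁻¹ * Bᴴ := by
      rw [Matrix.mul_assoc B S⁻¹ S, hSinv, Matrix.mul_one]
    have e1 : B * S⁻¹ * Bᴴ * (B * A⁻¹ * Bᴴ) = B * S⁻¹ * Bᴴ - B * A⁻¹ * Bᴴ := by
      calc B * S⁻¹ * Bᴴ * (B * A⁻¹ * Bᴴ)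
          = B * S⁻¹ * (Bᴴ * B) * A⁻¹ * Bᴴ := by simp only [Matrix.mul_assoc]
        _ = B * S⁻¹ * A * A⁻¹ * Bᴴ - B * S⁻¹ * S * A⁻¹ * Bᴴ := by
            rw [hBB, Matrix.mul_sub, Matrix.sub_mul, Matrix.sub_mul]
        _ = B * S⁻¹ * Bᴴ - B * A⁻¹ * Bᴴ := by rw [c1, c2]
    calc (1 + B * S⁻¹ * Bᴴ) * (1 - B * A⁻¹ * Bᴴ)
        = 1 - B * A⁻¹ * Bᴴ + B * S⁻¹ * Bᴴ - B * S⁻¹ * Bᴴ * (B * A⁻¹ * Bᴴ) := by noncomm_ring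
      _ = 1 := by rw [e1]; abel
  have h2 : (1 + B * S⁻¹ * Bᴴ)⁻¹ = 1 - B * A⁻¹ * Bᴴ := Matrix.inv_eq_right_inv key
  rw [← h2]
  exact hT.inv

lemma psd_diag_nonneg {n : Type*} [Fintype n] [DecidableEq n] {Q : Matrix n n ℂ}
    (hQ : Q.PosSemidef) (i : n) : 0 ≤ Q i i := by
  simpa [Matrix.mulVec_single, ← Pi.single_star, single_dotProduct]
    using hQ.dotProduct_mulVec_nonneg (Pi.single i 1)

lemma psd_entry_abs_le {n : Type*} [Fintype n] [DecidableEq n] {Q : Matrix n n ℂ}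
    (hQ : Q.PosSemidef) (i j : n) :
    ‖Q i j‖ ≤ ((Q i i).re + (Q j j).re) / 2 := by
  have hii := psd_diag_nonneg hQ i
  have hjj := psd_diag_nonneg hQ j
  have hii' : 0 ≤ (Q i i).re := (Complex.le_def.mp hii).1
  have hjj' : 0 ≤ (Q j j).re := (Complex.le_def.mp hjj).1
  rcases eq_or_ne i j with rfl | hij
  · have him : (Q i i).im = 0 := (Complex.le_def.mp hii).2.symm
    rw [Complex.norm_def, Complex.normSq_apply, him]
    simp only [mul_zero, add_zero]
    rw [Real.sqrt_mul_self hii']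
    linarith
  set z := Q i j with hz
  rcases eq_or_ne z 0 with h0 | h0
  · rw [h0]; simp; linarith
  set r : ℝ := ‖z‖ with hr
  have hrpos : 0 < r := by simpa [hr] using norm_pos_iff.mpr h0
  have key := hQ.dotProduct_mulVec_nonneg (Pi.single i (r : ℂ) + Pi.single j (-(starRingEnd ℂ) z))
  have hherm : Q j i = (starRingEnd ℂ) z := by
    have := congrFun (congrFun hQ.isHermitian j) i
    simpa [Matrix.conjTranspose_apply, hz] using this.symm
  have hzz : z * (starRingEnd ℂ) z = (r:ℂ)^2 := by
    rw [Complex.mul_conj, Complex.normSq_eq_norm_sq]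
    push_cast [hr]
    ring
  have hval : star (Pi.single i (r : ℂ) + Pi.single j (-(starRingEnd ℂ) z)) ⬝ᵥ
      Q *ᵥ (Pi.single i (r : ℂ) + Pi.single j (-(starRingEnd ℂ) z))
      = (r:ℂ)^2 * (Q i i + Q j j) - 2*(r:ℂ)^3 := by
    simp only [Matrix.mulVec_add, Matrix.mulVec_single, star_add, dotProduct_add,
      add_dotProduct, ← Pi.single_star, star_neg, single_dotProduct,
      Complex.star_def, Complex.conj_conj, Complex.conj_ofReal, hherm, ← hz, Pi.smul_apply, MulOpposite.smul_eq_mul_unop,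
      MulOpposite.unop_op, Matrix.col_apply]
    linear_combination (Q j j - 2*(r:ℂ)) * hzz
  rw [hval] at key
  norm_cast at key
  have hre := (Complex.le_def.mp key).1
  simp only [Complex.sub_re, Complex.re_ofReal_mul, Complex.add_re, Complex.ofReal_re,
    Complex.zero_re] at hre
  nlinarith [mul_pos hrpos hrpos, hre, hrpos]

lemma psd_entry_abs_le_one {n : Type*} [Fintype n] [DecidableEq n] {Q : Matrix n n ℂ}
    (hQ : Q.PosSemidef) (hQ1 : ((1 : Matrix n n ℂ) - Q).PosSemidef) (i j : n) :
    ‖Q i j‖ ≤ 1 := by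
  have h := psd_entry_abs_le hQ i j
  have bi : (Q i i).re ≤ 1 := by
    have := (Complex.le_def.mp (psd_diag_nonneg hQ1 i)).1
    simp [Matrix.sub_apply, Matrix.one_apply, Complex.sub_re] at this
    linarith
  have bj : (Q j j).re ≤ 1 := by
    have := (Complex.le_def.mp (psd_diag_nonneg hQ1 j)).1
    simp [Matrix.sub_apply, Matrix.one_apply, Complex.sub_re] at this
    linarith
  linarith

section Meas
variable {Ω : Type*} [MeasurableSpace Ω]

lemma measEnt_det {n : ℕ} {A : Ω → Matrix (Fin n) (Fin n) ℂ}
    (h : ∀ i j, Measurable fun ω => A ω i j) : Measurable fun ω => (A ω).det := by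
  simp only [Matrix.det_apply']
  exact Finset.measurable_sum _ fun σ _ =>
    (Finset.measurable_prod _ fun i _ => h _ _).const_mul _

lemma measEnt_inv {n : ℕ} {A : Ω → Matrix (Fin n) (Fin n) ℂ}
    (h : ∀ i j, Measurable fun ω => A ω i j) (i j : Fin n) :
    Measurable fun ω => (A ω)⁻¹ i j := by
  simp only [Matrix.inv_def, Matrix.smul_apply, Ring.inverse_eq_inv', Matrix.adjugate_apply,
    smul_eq_mul]
  refine Measurable.mul (measEnt_det h).inv (measEnt_det fun a b => ?_)
  simp only [Matrix.updateRow_apply]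
  by_cases hc : a = j
  · simp [hc]
  · simpa [hc] using h a b

lemma measEnt_mul {a b c : ℕ} {A : Ω → Matrix (Fin a) (Fin b) ℂ} {B : Ω → Matrix (Fin b) (Fin c) ℂ}
    (hA : ∀ i j, Measurable fun ω => A ω i j) (hB : ∀ i j, Measurable fun ω => B ω i j)
    (i : Fin a) (j : Fin c) : Measurable fun ω => (A ω * B ω) i j := by
  simp only [Matrix.mul_apply]
  exact Finset.measurable_sum _ fun k _ => (hA i k).mul (hB k j)

end Meas

lemma dot_intMat {Ω : Type*} [MeasurableSpace Ω] (μ : Measure Ω) {K : ℕ}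
    (Mf : Ω → Matrix (Fin K) (Fin K) ℂ)
    (hint : ∀ i j, Integrable (fun ω => Mf ω i j) μ) (x : Fin K → ℂ) :
    star x ⬝ᵥ (intMat μ Mf) *ᵥ x = ∫ ω, star x ⬝ᵥ (Mf ω) *ᵥ x ∂μ := by
  simp only [dotProduct, Matrix.mulVec, intMat, Matrix.of_apply, dotProduct]
  rw [integral_finset_sum _ fun i _ =>
    (integrable_finset_sum _ fun j _ => (hint i j).mul_const _).const_mul _]
  refine Finset.sum_congr rfl fun i _ => ?_
  have h1 : (∑ j, (∫ ω, Mf ω i j ∂μ) * x j) = ∫ ω, ∑ j, Mf ω i j * x j ∂μ := by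
    rw [integral_finset_sum _ fun j _ => (hint i j).mul_const _]
    exact Finset.sum_congr rfl fun j _ => (integral_mul_const _ _).symm
  rw [h1, ← integral_const_mul]

set_option maxHeartbeats 2000000 in
/-- For `Π = E[M]` with
`M = W^{1/2} Ĥ (Ĥᴴ W Ĥ + Ψ + P⁻¹ I)⁻¹ Ĥᴴ W^{1/2}` (`W` PSD diagonal, `Ψ` random PSD,
`P > 0`), `Π` is Hermitian, positive semidefinite, and `I − Π` is positive definite. -/
theorem statement15
    {Ω : Type*} [mΩ : MeasurableSpace Ω] (μ : Measure Ω) [IsProbabilityMeasure μ]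
    {K N : ℕ} (w : Fin K → ℝ) (hw0 : ∀ i, 0 ≤ w i) (P : ℝ) (hP : 0 < P)
    (Hhat : Ω → Matrix (Fin K) (Fin N) ℂ)
    (hHmeas : ∀ i j, Measurable fun ω => Hhat ω i j)
    (Ψ : Ω → Matrix (Fin N) (Fin N) ℂ)
    (hΨmeas : ∀ i j, Measurable fun ω => Ψ ω i j)
    (hΨ : ∀ ω, (Ψ ω).PosSemidef) :
    (intMat μ (Mrand w P Hhat Ψ)).IsHermitian ∧
    (intMat μ (Mrand w P Hhat Ψ)).PosSemidef ∧
    ((1 : Matrix (Fin K) (Fin K) ℂ) - intMat μ (Mrand w P Hhat Ψ)).PosDef := by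
  -- pointwise structure
  have hsqH : (sqrtDiag w)ᴴ = sqrtDiag w := by
    rw [sqrtDiag, Matrix.diagonal_conjTranspose]
    exact congrArg _ (funext fun i => by simp [Complex.conj_ofReal])
  have hsq2 : sqrtDiag w * sqrtDiag w = diagC w := by
    rw [sqrtDiag, diagC, Matrix.diagonal_mul_diagonal]
    exact congrArg _ (funext fun i => by
      rw [← Complex.ofReal_mul, Real.mul_self_sqrt (hw0 i)])
  have hSpd : ∀ ω, (Ψ ω + (P⁻¹ : ℂ) • (1 : Matrix (Fin N) (Fin N) ℂ)).PosDef := by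
    intro ω
    refine Matrix.PosDef.posSemidef_add (hΨ ω) ?_
    rw [Matrix.smul_one_eq_diagonal]
    rw [Matrix.posDef_diagonal_iff]
    intro i
    rw [show ((P : ℂ))⁻¹ = ((P⁻¹ : ℝ) : ℂ) by push_cast; ring]
    exact_mod_cast inv_pos.mpr hP
  have hMeq : ∀ ω, Mrand w P Hhat Ψ ω
      = (sqrtDiag w * Hhat ω) * ((sqrtDiag w * Hhat ω)ᴴ * (sqrtDiag w * Hhat ω)
          + (Ψ ω + (P⁻¹ : ℂ) • 1))⁻¹ * (sqrtDiag w * Hhat ω)ᴴ := by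
    intro ω
    have hBH : (sqrtDiag w * Hhat ω)ᴴ = (Hhat ω)ᴴ * sqrtDiag w := by
      rw [Matrix.conjTranspose_mul, hsqH]
    have hBB : (sqrtDiag w * Hhat ω)ᴴ * (sqrtDiag w * Hhat ω)
        = (Hhat ω)ᴴ * diagC w * Hhat ω := by
      rw [hBH, ← hsq2]
      simp only [Matrix.mul_assoc]
    rw [Mrand, hBB, hBH, add_assoc]
    simp only [Matrix.mul_assoc]
  have hpt : ∀ ω, (Mrand w P Hhat Ψ ω).PosSemidef ∧
      ((1 : Matrix (Fin K) (Fin K) ℂ) - Mrand w P Hhat Ψ ω).PosDef := by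
    intro ω
    rw [hMeq ω]
    exact woodbury _ _ (hSpd ω)
  -- measurability and integrability of entries
  have hmeas : ∀ i j, Measurable fun ω => Mrand w P Hhat Ψ ω i j := by
    intro i j
    have hHt : ∀ (i : Fin N) (j : Fin K), Measurable fun ω => (Hhat ω)ᴴ i j := by
      intro i j
      simp only [Matrix.conjTranspose_apply, Complex.star_def]
      exact Complex.continuous_conj.measurable.comp (hHmeas j i)
    set G : Ω → Matrix (Fin N) (Fin N) ℂ :=
      fun ω => (Hhat ω)ᴴ * diagC w * Hhat ω + Ψ ω + (P⁻¹ : ℂ) • 1 with hG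
    have hinner : ∀ (i j : Fin N), Measurable fun ω => G ω i j := by
      intro i j
      simp only [hG, Matrix.add_apply]
      refine Measurable.add (Measurable.add ?_ (hΨmeas i j)) measurable_const
      exact measEnt_mul (A := fun ω => (Hhat ω)ᴴ * diagC w) (B := Hhat)
        (measEnt_mul (A := fun ω => (Hhat ω)ᴴ) (B := fun _ => diagC w) hHt
          (fun _ _ => measurable_const)) hHmeas i j
    show Measurable fun ω =>
      (sqrtDiag w * Hhat ω * (G ω)⁻¹ * (Hhat ω)ᴴ * sqrtDiag w) i j
    exact measEnt_mul (A := fun ω => sqrtDiag w * Hhat ω * (G ω)⁻¹ * (Hhat ω)ᴴ)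
      (B := fun _ => sqrtDiag w)
      (measEnt_mul (A := fun ω => sqrtDiag w * Hhat ω * (G ω)⁻¹) (B := fun ω => (Hhat ω)ᴴ)
        (measEnt_mul (A := fun ω => sqrtDiag w * Hhat ω) (B := fun ω => (G ω)⁻¹)
          (measEnt_mul (A := fun _ => sqrtDiag w) (B := Hhat)
            (fun _ _ => measurable_const) hHmeas)
          (measEnt_inv (A := G) hinner))
        hHt)
      (fun _ _ => measurable_const) i j
  have hbd : ∀ ω i j, ‖Mrand w P Hhat Ψ ω i j‖ ≤ 1 := fun ω i j =>
    psd_entry_abs_le_one (hpt ω).1 (hpt ω).2.posSemidef i j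
  have hint : ∀ i j, Integrable (fun ω => Mrand w P Hhat Ψ ω i j) μ := by
    intro i j
    refine ⟨(hmeas i j).aestronglyMeasurable, ?_⟩
    exact HasFiniteIntegral.of_bounded (C := 1) (Filter.Eventually.of_forall fun ω => hbd ω i j)
  set Mf := Mrand w P Hhat Ψ with hMf
  -- Hermitian
  have herm : (intMat μ Mf).IsHermitian := by
    funext i j
    simp only [Matrix.conjTranspose_apply, intMat, Matrix.of_apply, Complex.star_def]
    rw [← integral_conj]
    congr 1
    funext ω
    have := congrFun (congrFun (hpt ω).1.isHermitian i) j
    simpa [Matrix.conjTranspose_apply, Complex.star_def] using this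
  refine ⟨herm, ?_, ?_⟩
  · refine .of_dotProduct_mulVec_nonneg herm fun x => ?_
    rw [dot_intMat μ Mf hint x]
    have hqint : Integrable (fun ω => star x ⬝ᵥ Mf ω *ᵥ x) μ := by
      simp only [dotProduct, Matrix.mulVec, dotProduct]
      exact integrable_finset_sum _ fun i _ =>
        ((integrable_finset_sum _ fun j _ => (hint i j).mul_const _).const_mul _)
    have hre := integral_re (𝕜 := ℂ) hqint
    have him := integral_im (𝕜 := ℂ) hqint
    simp only [RCLike.re_to_complex, RCLike.im_to_complex] at hre him
    refine Complex.le_def.mpr ⟨?_, ?_⟩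
    · rw [Complex.zero_re, ← hre]
      exact integral_nonneg fun ω => (Complex.le_def.mp ((hpt ω).1.dotProduct_mulVec_nonneg x)).1
    · rw [Complex.zero_im, ← him]
      rw [integral_congr_ae (Filter.Eventually.of_forall fun ω =>
        ((Complex.le_def.mp ((hpt ω).1.dotProduct_mulVec_nonneg x)).2.symm.trans Complex.zero_im))]
      simp
  · -- PosDef of 1 - Π
    have hint' : ∀ i j, Integrable (fun ω => ((1 : Matrix (Fin K) (Fin K) ℂ) - Mf ω) i j) μ := by
      intro i j
      exact (integrable_const ((1 : Matrix (Fin K) (Fin K) ℂ) i j)).sub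
        (hint i j)
    have hsub : intMat μ (fun ω => (1 : Matrix (Fin K) (Fin K) ℂ) - Mf ω)
        = 1 - intMat μ Mf := by
      funext i j
      simp only [intMat, Matrix.of_apply, Matrix.sub_apply]
      rw [integral_sub (integrable_const _) (hint i j), integral_const]
      simp
    refine .of_dotProduct_mulVec_pos (Matrix.isHermitian_one.sub herm) fun x hx => ?_
    rw [← hsub, dot_intMat μ _ hint' x]
    have hqpos : ∀ ω, (0:ℂ) < star x ⬝ᵥ ((1 : Matrix (Fin K) (Fin K) ℂ) - Mf ω) *ᵥ x :=
      fun ω => (hpt ω).2.dotProduct_mulVec_pos hx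
    have hqint : Integrable (fun ω => star x ⬝ᵥ ((1 : Matrix (Fin K) (Fin K) ℂ) - Mf ω) *ᵥ x) μ := by
      simp only [dotProduct, Matrix.mulVec, dotProduct]
      exact integrable_finset_sum _ fun i _ =>
        ((integrable_finset_sum _ fun j _ => (hint' i j).mul_const _).const_mul _)
    have hre := integral_re (𝕜 := ℂ) hqint
    have him := integral_im (𝕜 := ℂ) hqint
    simp only [RCLike.re_to_complex, RCLike.im_to_complex] at hre him
    refine Complex.lt_def.mpr ⟨?_, ?_⟩
    · rw [Complex.zero_re, ← hre]
      have hint_re : Integrable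
          (fun ω => (star x ⬝ᵥ ((1 : Matrix (Fin K) (Fin K) ℂ) - Mf ω) *ᵥ x).re) μ := by
        simpa [RCLike.re_to_complex] using hqint.re
      rw [integral_pos_iff_support_of_nonneg
        (fun ω => le_of_lt (by simpa using (Complex.lt_def.mp (hqpos ω)).1)) hint_re]
      have hsupp : Function.support
          (fun ω => (star x ⬝ᵥ ((1 : Matrix (Fin K) (Fin K) ℂ) - Mf ω) *ᵥ x).re) = Set.univ :=
        Set.eq_univ_of_forall fun ω =>
          ne_of_gt (by simpa using (Complex.lt_def.mp (hqpos ω)).1)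
      rw [hsupp, measure_univ]
      simp
    · rw [Complex.zero_im, ← him]
      rw [integral_congr_ae (Filter.Eventually.of_forall fun ω =>
        ((Complex.lt_def.mp (hqpos ω)).2.symm.trans Complex.zero_im))]
      simp
end
end

section
/- Let J be a nonempty finite index set, and for each j ∈ J let Π_j ∈ ℂ^{K×K} be Hermitian with 0 ≼ Π_j and I − Π_j positive definite. Then for every b ∈ ℂ^K, the linear system c_l + Σ_{j ∈ J∖{l}} Π_j c_j = b, required for all l ∈ J, has a unique solution (c_l)_{l∈J} ∈ (ℂ^K)^J. -/
open Matrix Finset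
open scoped ComplexOrder

noncomputable section

private lemma dot_sum {α : Type*} {n : ℕ} (u : Fin n → ℂ) (s : Finset α) (f : α → Fin n → ℂ) :
    u ⬝ᵥ (∑ j ∈ s, f j) = ∑ j ∈ s, u ⬝ᵥ f j := by
  simp only [dotProduct, Finset.sum_apply, Finset.mul_sum]
  exact Finset.sum_comm

private lemma psd_sub_sq {n : ℕ} {A : Matrix (Fin n) (Fin n) ℂ} (hA : A.PosSemidef)
    (h1 : ((1 : Matrix (Fin n) (Fin n) ℂ) - A).PosSemidef) : (A - A * A).PosSemidef := by
  obtain ⟨R, hRh, hRR⟩ : ∃ R, Rᴴ = R ∧ R * R = A :=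
    by open scoped MatrixOrder in exact
      ⟨CFC.sqrt A, (CFC.sqrt_nonneg A).posSemidef.1, CFC.sqrt_mul_sqrt_self A hA.nonneg⟩
  have key : A - A * A = R * (1 - A) * Rᴴ := by
    rw [hRh, ← hRR]
    noncomm_ring
  rw [key]
  exact h1.mul_mul_conjTranspose_same _

/-- Homogeneous uniqueness. -/
private lemma homog {K : ℕ} {ι : Type*} [DecidableEq ι]
    (J : Finset ι)
    (Pim : ι → Matrix (Fin K) (Fin K) ℂ)
    (hpsd : ∀ j ∈ J, (Pim j).PosSemidef)
    (hlt : ∀ j ∈ J, ((1 : Matrix (Fin K) (Fin K) ℂ) - Pim j).PosDef)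
    (c : ι → Fin K → ℂ)
    (hc : ∀ l ∈ J, c l + ∑ j ∈ J.erase l, Pim j *ᵥ c j = 0) :
    ∀ l ∈ J, c l = 0 := by
  set s : Fin K → ℂ := ∑ j ∈ J, Pim j *ᵥ c j with hs_def
  have hkey : ∀ l ∈ J, ((1 : Matrix (Fin K) (Fin K) ℂ) - Pim l) *ᵥ c l = -s := by
    intro l hl
    have h2 := hc l hl
    have h1 : ∑ j ∈ J.erase l, Pim j *ᵥ c j = s - Pim l *ᵥ c l := by
      rw [hs_def, ← Finset.add_sum_erase J _ hl]
      abel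
    rw [h1] at h2
    rw [sub_mulVec, one_mulVec]
    linear_combination (norm := abel) h2
  -- compute star s ⬝ᵥ s
  have hterm : ∀ j ∈ J, star s ⬝ᵥ (Pim j *ᵥ c j)
      = -(star (c j) ⬝ᵥ ((Pim j - Pim j * Pim j) *ᵥ c j)) := by
    intro j hj
    have hherm : (Pim j)ᴴ = Pim j := (hpsd j hj).1
    have e1 : star s ⬝ᵥ (Pim j *ᵥ c j) = star (Pim j *ᵥ s) ⬝ᵥ c j := by
      rw [dotProduct_mulVec, star_mulVec, hherm]
    rw [e1]
    have e2 : Pim j *ᵥ s = -((Pim j - Pim j * Pim j) *ᵥ c j) := by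
      have := hkey j hj
      have : s = -(((1 : Matrix (Fin K) (Fin K) ℂ) - Pim j) *ᵥ c j) := by
        rw [this]; abel
      rw [this, mulVec_neg, mulVec_mulVec, mul_sub, mul_one]
    rw [e2, star_neg, neg_dotProduct, neg_inj]
    have hBherm : (Pim j - Pim j * Pim j)ᴴ = Pim j - Pim j * Pim j :=
      (psd_sub_sq (hpsd j hj) (hlt j hj).posSemidef).1
    rw [dotProduct_mulVec, star_mulVec, hBherm]
  have hsum : star s ⬝ᵥ s
      = -∑ j ∈ J, star (c j) ⬝ᵥ ((Pim j - Pim j * Pim j) *ᵥ c j) := by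
    rw [hs_def, dot_sum, ← Finset.sum_neg_distrib]
    exact Finset.sum_congr rfl fun j hj => by rw [hterm j hj]
  have hle : star s ⬝ᵥ s ≤ 0 := by
    rw [hsum, neg_nonpos]
    exact Finset.sum_nonneg fun j hj => (psd_sub_sq (hpsd j hj) (hlt j hj).posSemidef).dotProduct_mulVec_nonneg (c j)
  have hge : 0 ≤ star s ⬝ᵥ s := dotProduct_star_self_nonneg s
  have hs0 : s = 0 := dotProduct_star_self_eq_zero.mp (le_antisymm hle hge)
  intro l hl
  by_contra hne
  have hpos := (hlt l hl).dotProduct_mulVec_pos hne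
  rw [hkey l hl, hs0, neg_zero, dotProduct_zero] at hpos
  exact lt_irrefl _ hpos

/-- If, for each `j` in a nonempty finite index set `J`, `Π_j ∈ ℂ^{K×K}` is
Hermitian with `0 ≼ Π_j` and `I − Π_j` positive definite, then for every `b ∈ ℂ^K` the linear
system `c_l + ∑_{j ∈ J∖{l}} Π_j c_j = b` (for all `l ∈ J`) has a unique solution. -/
theorem statement16 {K : ℕ} {ι : Type*} [DecidableEq ι]
    (J : Finset ι) (hJ : J.Nonempty)
    (Pim : ι → Matrix (Fin K) (Fin K) ℂ)
    (hpsd : ∀ j ∈ J, (Pim j).PosSemidef)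
    (hlt : ∀ j ∈ J, ((1 : Matrix (Fin K) (Fin K) ℂ) - Pim j).PosDef)
    (b : Fin K → ℂ) :
    ∃! c : ι → Fin K → ℂ,
      (∀ l ∈ J, c l + ∑ j ∈ J.erase l, Pim j *ᵥ c j = b) ∧ ∀ l ∉ J, c l = 0 := by
  classical
  -- the linear endomorphism on functions J → (Fin K → ℂ)
  let T : (↥J → Fin K → ℂ) →ₗ[ℂ] (↥J → Fin K → ℂ) :=
    { toFun := fun d l => d l - Pim l.val *ᵥ d l + ∑ j ∈ J.attach, Pim j.val *ᵥ d j
      map_add' := by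
        intro d e
        funext l
        show (d l + e l) - Pim l.val *ᵥ (d l + e l) + ∑ j ∈ J.attach, Pim j.val *ᵥ (d j + e j)
          = (d l - Pim l.val *ᵥ d l + ∑ j ∈ J.attach, Pim j.val *ᵥ d j)
            + (e l - Pim l.val *ᵥ e l + ∑ j ∈ J.attach, Pim j.val *ᵥ e j)
        simp only [mulVec_add, Finset.sum_add_distrib]
        abel
      map_smul' := by
        intro a d
        funext l
        show (a • d l) - Pim l.val *ᵥ (a • d l) + ∑ j ∈ J.attach, Pim j.val *ᵥ (a • d j)
          = a • (d l - Pim l.val *ᵥ d l + ∑ j ∈ J.attach, Pim j.val *ᵥ d j)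
        simp only [mulVec_smul, smul_add, smul_sub, Finset.smul_sum] }
  -- relate the T-equation on the subtype to the original system
  have hext : ∀ (d : ↥J → Fin K → ℂ) (l : ι) (hl : l ∈ J),
      (fun j => if h : j ∈ J then d ⟨j, h⟩ else 0) l
        + ∑ j ∈ J.erase l, Pim j *ᵥ (fun j => if h : j ∈ J then d ⟨j, h⟩ else 0) j
      = T d ⟨l, hl⟩ := by
    intro d l hl
    have h1 : ∑ j ∈ J.erase l, Pim j *ᵥ (fun j => if h : j ∈ J then d ⟨j, h⟩ else 0) j
        = (∑ j ∈ J, Pim j *ᵥ (fun j => if h : j ∈ J then d ⟨j, h⟩ else 0) j)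
          - Pim l *ᵥ d ⟨l, hl⟩ := by
      rw [← Finset.add_sum_erase J _ hl]
      simp only [dif_pos hl]
      abel
    have h2 : ∑ j ∈ J, Pim j *ᵥ (fun j => if h : j ∈ J then d ⟨j, h⟩ else 0) j
        = ∑ j ∈ J.attach, Pim j.val *ᵥ d j := by
      rw [← Finset.sum_attach J fun j => Pim j *ᵥ (fun j => if h : j ∈ J then d ⟨j, h⟩ else 0) j]
      exact Finset.sum_congr rfl fun j _ => by simp [j.prop]
    rw [h1, h2]
    simp only [T, LinearMap.coe_mk, AddHom.coe_mk, dif_pos hl]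
    ring
  -- T is injective
  have hinj : Function.Injective T := by
    rw [← LinearMap.ker_eq_bot, LinearMap.ker_eq_bot']
    intro d hd
    set c : ι → Fin K → ℂ := fun j => if h : j ∈ J then d ⟨j, h⟩ else 0 with hc_def
    have h0 : ∀ l ∈ J, c l + ∑ j ∈ J.erase l, Pim j *ᵥ c j = 0 := by
      intro l hl
      rw [hc_def, hext d l hl, hd]
      rfl
    have := homog J Pim hpsd hlt c h0
    funext l
    have := this l.val l.prop
    rw [hc_def] at this
    simpa [l.prop] using this
  have hsurj : Function.Surjective T := (LinearMap.injective_iff_surjective).mp hinj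
  obtain ⟨d, hd⟩ := hsurj (fun _ => b)
  refine ⟨fun j => if h : j ∈ J then d ⟨j, h⟩ else 0, ⟨?_, ?_⟩, ?_⟩
  · intro l hl
    rw [hext d l hl, hd]
  · intro l hl
    simp [hl]
  · rintro c' ⟨hc'1, hc'2⟩
    set c : ι → Fin K → ℂ := fun j => if h : j ∈ J then d ⟨j, h⟩ else 0 with hc_def
    have hc1 : ∀ l ∈ J, c l + ∑ j ∈ J.erase l, Pim j *ᵥ c j = b := by
      intro l hl; rw [hc_def, hext d l hl, hd]
    have hdiff : ∀ l ∈ J, (c' - c) l + ∑ j ∈ J.erase l, Pim j *ᵥ (c' - c) j = 0 := by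
      intro l hl
      have h1 := hc1 l hl
      have h2 := hc'1 l hl
      simp only [Pi.sub_apply, mulVec_sub, Finset.sum_sub_distrib]
      linear_combination (norm := abel) h2 - h1
    have hz := homog J Pim hpsd hlt (c' - c) hdiff
    funext l
    by_cases hl : l ∈ J
    · have h3 := hz l hl
      rw [Pi.sub_apply, sub_eq_zero] at h3
      exact h3
    · rw [hc'2 l hl, hc_def]; simp [hl]
end
end
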